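/- Let b_1 ≥ 1 and b_2 ≥ 2 be integers such that gcd(b_2, 2) = 1, gcd(b_2, 2^{b_1} - 1) = 1, and gcd(φ(b_2), 2^{b_1} - 1) = 1, where φ is Euler's totient function. Consider the polynomial e(X) = 1 + X + X^2 + ... + X^{b_2-1} over the finite field F = GF(2^{b_1}). Then: (i) e is squarefree and not divisible by X; (ii) the least positive integer h such that e(X) divides X^h - 1 equals b_2 (so the period of e is coprime to 2^{b_1} - 1); and (iii) the degree over F of the splitting field of e equals the multiplicative order of 2^{b_1} modulo b_2, and in particular this degree is coprime to 2^{b_1} - 1. -/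

import Mathlib

open Polynomial

section Aux

variable {K : Type*} [Field K] [CharP K 2]

lemma aux_not_dvd_two {b₂ : ℕ} (hc1 : Nat.gcd b₂ 2 = 1) : ¬ 2 ∣ b₂ := by
  intro h
  have : (2 : ℕ) ∣ 1 := hc1 ▸ Nat.dvd_gcd h (dvd_refl 2)
  norm_num at this

lemma aux_cast_ne {b₂ : ℕ} (hodd : ¬ 2 ∣ b₂) : (b₂ : K) ≠ 0 := by
  rwa [Ne, CharP.cast_eq_zero_iff K 2 b₂]

lemma aux_key (b₂ : ℕ) :
    (∑ i ∈ Finset.range b₂, (X : K[X]) ^ i) * (X - 1) = X ^ b₂ - 1 := by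
  simpa using geom_sum_mul (X : K[X]) b₂

lemma aux_eval_one (b₂ : ℕ) :
    (∑ i ∈ Finset.range b₂, (X : K[X]) ^ i).eval 1 = (b₂ : K) := by
  simp [eval_finset_sum]

lemma aux_sf {b₂ : ℕ} (hb₂ : 2 ≤ b₂) (hodd : ¬ 2 ∣ b₂) :
    Squarefree (∑ i ∈ Finset.range b₂, (X : K[X]) ^ i) := by
  have hsep : (X ^ b₂ - 1 : K[X]).Separable :=
    X_pow_sub_one_separable_iff.mpr (aux_cast_ne hodd)
  exact hsep.squarefree.squarefree_of_dvd ⟨X - 1, (aux_key b₂).symm⟩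

lemma aux_X_not_dvd {b₂ : ℕ} (hb₂ : 2 ≤ b₂) :
    ¬ (X : K[X]) ∣ ∑ i ∈ Finset.range b₂, (X : K[X]) ^ i := by
  rw [X_dvd_iff]
  have : (∑ i ∈ Finset.range b₂, (X : K[X]) ^ i).coeff 0 = 1 := by
    rw [finset_sum_coeff]
    simp only [coeff_X_pow]
    rw [Finset.sum_ite_eq (Finset.range b₂) 0 (fun _ => (1 : K))]
    simp [Nat.lt_of_lt_of_le Nat.zero_lt_two hb₂]
  simp [this]

lemma aux_isleast {b₂ : ℕ} (hb₂ : 2 ≤ b₂) (hodd : ¬ 2 ∣ b₂) :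
    IsLeast {h : ℕ | 0 < h ∧ (∑ i ∈ Finset.range b₂, (X : K[X]) ^ i) ∣ X ^ h - 1} b₂ := by
  set e : K[X] := ∑ i ∈ Finset.range b₂, (X : K[X]) ^ i with he
  constructor
  · exact ⟨by omega, ⟨X - 1, (aux_key b₂).symm⟩⟩
  · rintro h ⟨hh0, hdvd⟩
    -- X - 1 does not divide e
    have hnr : ¬ (X - C (1:K)) ∣ e := by
      rw [dvd_iff_isRoot]
      intro hr
      have := aux_eval_one (K := K) b₂
      rw [IsRoot.def] at hr
      rw [hr] at this
      exact aux_cast_ne hodd this.symm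
    have hcop : IsCoprime (X - C (1:K)) e :=
      (irreducible_X_sub_C (1:K)).coprime_iff_not_dvd.mpr hnr
    have hXsub : (X - C (1:K)) ∣ (X : K[X]) ^ h - 1 := by
      simpa using sub_dvd_pow_sub_pow (X : K[X]) (C 1) h
    have hmul : (X ^ b₂ - 1 : K[X]) ∣ X ^ h - 1 := by
      rw [← aux_key b₂, mul_comm]
      exact hcop.mul_dvd hXsub hdvd
    have hne : ((X : K[X]) ^ h - 1) ≠ 0 := by
      intro h0
      have := natDegree_X_pow_sub_C (n := h) (r := (1:K))
      rw [show (X ^ h - 1 : K[X]) = X ^ h - C 1 by simp] at h0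
      rw [h0] at this
      simp at this
      omega
    have hdeg := natDegree_le_of_dvd hmul hne
    rw [show (X ^ b₂ - 1 : K[X]) = X ^ b₂ - C 1 by simp,
      show (X ^ h - 1 : K[X]) = X ^ h - C 1 by simp,
      natDegree_X_pow_sub_C, natDegree_X_pow_sub_C] at hdeg
    exact hdeg

end Aux


section Rank

variable {F : Type*} [Field F] [Fintype F] [CharP F 2]

lemma aux_cast_ne' {b₂ : ℕ} {L : Type*} [Field L] [CharP L 2] (hodd : ¬ 2 ∣ b₂) : (b₂ : L) ≠ 0 := by
  rwa [Ne, CharP.cast_eq_zero_iff L 2 b₂]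

lemma aux_key' (b₂ : ℕ) {L : Type*} [Field L] :
    (∑ i ∈ Finset.range b₂, (X : L[X]) ^ i) * (X - 1) = X ^ b₂ - 1 := by
  simpa using geom_sum_mul (X : L[X]) b₂

lemma aux_finrank (b₁ b₂ : ℕ) (hb₁ : 1 ≤ b₁) (hcardF : Fintype.card F = 2 ^ b₁)
    (hb₂ : 2 ≤ b₂) (hodd : ¬ 2 ∣ b₂) :
    Module.finrank F (SplittingField (∑ i ∈ Finset.range b₂, (X : F[X]) ^ i)) =
      orderOf ((2 : ZMod b₂) ^ b₁) := by
  haveI : NeZero b₂ := ⟨by omega⟩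
  set e : F[X] := ∑ i ∈ Finset.range b₂, (X : F[X]) ^ i with he
  set K := SplittingField e with hK
  haveI : CharP K 2 := charP_of_injective_algebraMap (algebraMap F K).injective 2
  haveI : Finite K := Module.finite_of_finite F
  haveI : Fintype K := Fintype.ofFinite K
  set m := Module.finrank F K with hm
  set d := orderOf ((2 : ZMod b₂) ^ b₁) with hd
  have hm_pos : 0 < m := Module.finrank_pos
  have hcardK : Fintype.card K = 2 ^ (b₁ * m) := by
    rw [Module.card_eq_pow_finrank (K := F) (V := K), hcardF, ← pow_mul]
  -- positivity of d
  have hcop2 : Nat.Coprime 2 b₂ := (Nat.prime_two.coprime_iff_not_dvd).mpr hodd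
  set u : (ZMod b₂)ˣ := ZMod.unitOfCoprime 2 hcop2 with hu
  have hu2 : ((u : ZMod b₂)) = 2 := ZMod.coe_unitOfCoprime 2 hcop2
  have hord_eq : d = orderOf (u ^ b₁) := by
    rw [hd, ← orderOf_units, Units.val_pow_eq_pow_val, hu2]
  have hd_pos : 0 < d := by rw [hord_eq]; exact orderOf_pos _
  have hd_dvd_tot : d ∣ Nat.totient b₂ := by
    rw [hord_eq, ← ZMod.card_units_eq_totient]
    exact orderOf_dvd_card
  -- b₂ divides 2 ^ (b₁ * d) - 1
  have hcast_pow : ∀ n : ℕ, ((2 : ZMod b₂) ^ b₁) ^ n = 1 ↔ b₂ ∣ 2 ^ (b₁ * n) - 1 := by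
    intro n
    rw [← pow_mul]
    constructor
    · intro h
      have : ((2 ^ (b₁ * n) - 1 : ℕ) : ZMod b₂) = 0 := by
        rw [Nat.cast_sub (Nat.one_le_two_pow), Nat.cast_pow, Nat.cast_ofNat, h, Nat.cast_one, sub_self]
      exact (ZMod.natCast_eq_zero_iff _ _).mp this
    · intro h
      have : ((2 ^ (b₁ * n) - 1 : ℕ) : ZMod b₂) = 0 := (ZMod.natCast_eq_zero_iff _ _).mpr h
      rwa [Nat.cast_sub (Nat.one_le_two_pow), Nat.cast_pow, Nat.cast_ofNat, Nat.cast_one,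
        sub_eq_zero] at this
  have hb₂_dvd_qd : b₂ ∣ 2 ^ (b₁ * d) - 1 := (hcast_pow d).mp (by rw [hd]; exact pow_orderOf_eq_one _)
  -- Claim A : d ∣ m
  have hsplitF : Splits ((X ^ b₂ - 1 : F[X]).map (algebraMap F K)) := by
    rw [← aux_key' b₂, Polynomial.map_mul]
    exact (SplittingField.splits e).mul (by simpa using Splits.X_sub_C (1 : K))
  have hsplitK : Splits (X ^ b₂ - 1 : K[X]) := by
    have := hsplitF
    simpa [Polynomial.map_sub, Polynomial.map_pow] using this
  have hsepK : (X ^ b₂ - 1 : K[X]).Separable :=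
    X_pow_sub_one_separable_iff.mpr (aux_cast_ne' hodd)
  classical
  have hroots_card : Multiset.card (nthRoots b₂ (1 : K)) = b₂ := by
    rw [nthRoots, C_1, splits_iff_card_roots.mp hsplitK, ← C_1, natDegree_X_pow_sub_C]
  have hroots_nodup : (nthRoots b₂ (1 : K)).Nodup := by
    rw [nthRoots, C_1]
    exact nodup_roots hsepK
  have hcardRU : Nat.card (rootsOfUnity b₂ K) = b₂ := by
    rw [Nat.card_eq_fintype_card, Fintype.card_congr (rootsOfUnityEquivNthRoots K b₂),
      Fintype.card_of_subtype (nthRoots b₂ (1 : K)).toFinset (fun x => Multiset.mem_toFinset),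
      Multiset.toFinset_card_of_nodup hroots_nodup, hroots_card]
  have hb₂_dvd_qm : b₂ ∣ 2 ^ (b₁ * m) - 1 := by
    have h1 : Nat.card (rootsOfUnity b₂ K) ∣ Nat.card Kˣ := Subgroup.card_subgroup_dvd_card _
    rw [hcardRU, Nat.card_eq_fintype_card, Fintype.card_units, hcardK] at h1
    exact h1
  have hd_dvd_m : d ∣ m := by
    rw [hd]
    exact orderOf_dvd_of_pow_eq_one ((hcast_pow m).mpr hb₂_dvd_qm)
  -- Claim B : m ≤ d
  set N := 2 ^ (b₁ * d) with hN
  have hbd : b₁ * d ≠ 0 := by positivity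
  have hN1 : 1 ≤ N := Nat.one_le_two_pow
  let T : Subalgebra F K :=
    { carrier := {x | x ^ N = x}
      mul_mem' := fun {a b} ha hb => by
        simp only [Set.mem_setOf_eq] at ha hb ⊢
        rw [mul_pow, ha, hb]
      one_mem' := one_pow N
      add_mem' := fun {a b} ha hb => by
        simp only [Set.mem_setOf_eq] at ha hb ⊢
        rw [hN, add_pow_char_pow, ha, hb]
      zero_mem' := zero_pow (by omega)
      algebraMap_mem' := fun r => by
        simp only [Set.mem_setOf_eq, ← map_pow]
        congr 1
        have : N = Fintype.card F ^ d := by rw [hcardF, ← pow_mul]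
        rw [this]
        exact FiniteField.pow_card_pow d r }
  have hroots_T : ∀ x ∈ e.rootSet K, x ∈ T := by
    intro x hx
    have hx' : aeval x e = 0 := (mem_rootSet.mp hx).2
    have hxb : x ^ b₂ = 1 := by
      have : aeval x ((X : F[X]) ^ b₂ - 1) = 0 := by
        rw [← aux_key' b₂, map_mul, hx', zero_mul]
      rw [map_sub, map_pow, map_one, aeval_X, sub_eq_zero] at this
      exact this
    show x ^ N = x
    obtain ⟨t, ht⟩ := hb₂_dvd_qd
    have : x ^ (N - 1) = 1 := by
      rw [ht, pow_mul, hxb, one_pow]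
    calc x ^ N = x ^ (N - 1) * x := by rw [← pow_succ]; congr 1; omega
    _ = x := by rw [this, one_mul]
  have hT_top : ∀ x : K, x ^ N = x := by
    have hadj : Algebra.adjoin F (e.rootSet K) = ⊤ := IsSplittingField.adjoin_rootSet K e
    have : (⊤ : Subalgebra F K) ≤ T := by
      rw [← hadj]
      exact Algebra.adjoin_le hroots_T
    exact fun x => this (by trivial)
  have hm_le_d : m ≤ d := by
    have hPne : ((X : K[X]) ^ 2 ^ (b₁ * d) - X) ≠ 0 :=
      FiniteField.X_pow_card_pow_sub_X_ne_zero K hbd one_lt_two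
    have hPdeg : ((X : K[X]) ^ 2 ^ (b₁ * d) - X).natDegree = 2 ^ (b₁ * d) :=
      FiniteField.X_pow_card_pow_sub_X_natDegree_eq K hbd one_lt_two
    have hsub : Finset.univ ⊆ ((X : K[X]) ^ 2 ^ (b₁ * d) - X).roots.toFinset := by
      intro x _
      rw [Multiset.mem_toFinset, mem_roots hPne]
      simp only [IsRoot.def, eval_sub, eval_pow, eval_X]
      rw [← hN, hT_top x, sub_self]
    have hcard_le : Fintype.card K ≤ 2 ^ (b₁ * d) := by
      calc Fintype.card K = Finset.univ.card := (Finset.card_univ).symm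
      _ ≤ ((X : K[X]) ^ 2 ^ (b₁ * d) - X).roots.toFinset.card := Finset.card_le_card hsub
      _ ≤ Multiset.card ((X : K[X]) ^ 2 ^ (b₁ * d) - X).roots := Multiset.toFinset_card_le _
      _ ≤ 2 ^ (b₁ * d) := le_trans (card_roots' _) (le_of_eq hPdeg)
    rw [hcardK] at hcard_le
    have := (Nat.pow_le_pow_iff_right one_lt_two).mp hcard_le
    exact Nat.le_of_mul_le_mul_left this (by omega)
  exact le_antisymm hm_le_d (Nat.le_of_dvd hm_pos hd_dvd_m)
end Rank


lemma aux_ord_dvd_totient (b₁ b₂ : ℕ) (hb₂ : 2 ≤ b₂) (hc1 : Nat.gcd b₂ 2 = 1) :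
    orderOf ((2 : ZMod b₂) ^ b₁) ∣ Nat.totient b₂ := by
  haveI : NeZero b₂ := ⟨by omega⟩
  have hcop2 : Nat.Coprime 2 b₂ := (Nat.prime_two.coprime_iff_not_dvd).mpr (aux_not_dvd_two hc1)
  set u : (ZMod b₂)ˣ := ZMod.unitOfCoprime 2 hcop2 with hu
  have hu2 : ((u : ZMod b₂)) = 2 := ZMod.coe_unitOfCoprime 2 hcop2
  have hord_eq : orderOf ((2 : ZMod b₂) ^ b₁) = orderOf (u ^ b₁) := by
    rw [← orderOf_units, Units.val_pow_eq_pow_val, hu2]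
  rw [hord_eq, ← ZMod.card_units_eq_totient]
  exact orderOf_dvd_card

theorem stmt1 (b₁ b₂ : ℕ) (hb₁ : 1 ≤ b₁) (hb₂ : 2 ≤ b₂)
    (hc1 : Nat.gcd b₂ 2 = 1) (hc2 : Nat.gcd b₂ (2 ^ b₁ - 1) = 1)
    (hc3 : Nat.gcd (Nat.totient b₂) (2 ^ b₁ - 1) = 1) :
    let F := GaloisField 2 b₁
    let e : F[X] := ∑ i ∈ Finset.range b₂, X ^ i
    (Squarefree e ∧ ¬ (X : F[X]) ∣ e) ∧
    (IsLeast {h : ℕ | 0 < h ∧ e ∣ X ^ h - 1} b₂ ∧ Nat.Coprime b₂ (2 ^ b₁ - 1)) ∧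
    (Module.finrank F e.SplittingField = orderOf ((2 : ZMod b₂) ^ b₁) ∧
     Nat.Coprime (Module.finrank F e.SplittingField) (2 ^ b₁ - 1)) := by
  intro F e
  haveI : Fintype F := Fintype.ofFinite F
  have hcardF : Fintype.card F = 2 ^ b₁ := by
    rw [← Nat.card_eq_fintype_card]
    exact GaloisField.card 2 b₁ (by omega)
  have hodd : ¬ 2 ∣ b₂ := aux_not_dvd_two hc1
  have hrank := aux_finrank (F := F) b₁ b₂ hb₁ hcardF hb₂ hodd
  refine ⟨⟨aux_sf hb₂ hodd, aux_X_not_dvd hb₂⟩, ⟨aux_isleast hb₂ hodd, hc2⟩, hrank, ?_⟩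
  rw [hrank]
  exact Nat.Coprime.coprime_dvd_left (aux_ord_dvd_totient b₁ b₂ hb₂ hc1) hc3
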